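/- Let T, the constants, and a gadget system satisfying (G1)–(G9) be as in the context. Then there is a subset C₁ ⊆ A₁ of size at least |A₁|/(36ρ²) such that |N^ν_okay(s) ∩ W(C₁ ∖ {α})| ≥ φ₁kt for every α ∈ C₁, every s ∈ S(α) and every ν ∈ {+,−}. -/

import Mathlib

open Finset

namespace TournamentPartition

/-! ### Basic constants from the paper -/

def rho : ℕ := 10 ^ 4
def sigma1 : ℕ := 10 ^ 60
def sigma2 : ℕ := 10 ^ 4
def sigma3 : ℕ := 10

/-- `s` contains at least `m` elements satisfying `P`. -/
def ManyIn {α : Type*} (s : Finset α) (m : ℝ) (P : α → Prop) : Prop :=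
  ∃ s' : Finset α, s' ⊆ s ∧ m ≤ (s'.card : ℝ) ∧ ∀ x ∈ s', P x

section Defs

variable {V I : Type*}

/-- `E u v` means that the edge between `u` and `v` is directed from `u` to `v`. -/
def IsTournament (E : V → V → Prop) : Prop :=
  (∀ v, ¬ E v v) ∧ ∀ u v : V, u ≠ v → (E u v ↔ ¬ E v u)

/-- There is a directed path from `u` to `v` all of whose vertices lie in `S`. -/
def ReachWithin (E : V → V → Prop) (S : Set V) (u v : V) : Prop :=
  Relation.ReflTransGen (fun a b => a ∈ S ∧ b ∈ S ∧ E a b) u v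

def StronglyConnectedOn (E : V → V → Prop) (S : Set V) : Prop :=
  ∀ u ∈ S, ∀ v ∈ S, ReachWithin E S u v

/-- A directed path, as a list of distinct vertices with consecutive edges. -/
def IsDiPath (E : V → V → Prop) (l : List V) : Prop :=
  l ≠ [] ∧ l.Nodup ∧ l.Chain' E

variable [Fintype V] [DecidableEq V]

/-- The set `S` induces a strongly `k`-connected subtournament. -/
def StronglyKConnectedOn (E : V → V → Prop) (k : ℕ) (S : Finset V) : Prop :=
  k + 1 ≤ S.card ∧
    ∀ Z : Finset V, Z.card ≤ k → StronglyConnectedOn E ((S \ Z : Finset V) : Set V)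

def StronglyKConnected (E : V → V → Prop) (k : ℕ) : Prop :=
  StronglyKConnectedOn E k Finset.univ

def outN (E : V → V → Prop) [DecidableRel E] (u : V) : Finset V :=
  Finset.univ.filter fun v => E u v

def inN (E : V → V → Prop) [DecidableRel E] (u : V) : Finset V :=
  Finset.univ.filter fun v => E v u

/-- A system of gadgets `U(α)` with special sets `S⁺(α), S⁻(α) ⊆ S(α) ⊆ U(α)`,
exceptional sets `X(α)` and special vertices `s⁺(α), s⁻(α) ∈ S(α)`. -/
structure GadgetSystem (V I : Type*) where
  U : I → Finset V
  S : I → Finset V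
  Sp : I → Finset V
  Sm : I → Finset V
  X : I → Finset V
  sp : I → V
  sm : I → V
  sp_mem : ∀ α, sp α ∈ S α
  sm_mem : ∀ α, sm α ∈ S α
  Sp_subset : ∀ α, Sp α ⊆ S α
  Sm_subset : ∀ α, Sm α ⊆ S α
  S_subset : ∀ α, S α ⊆ U α

variable [Fintype I] [DecidableEq I]

def Vokay (G : GadgetSystem V I) : Finset V :=
  Finset.univ \ Finset.univ.biUnion G.S

/-- Vertices of `V_okay` having no out-neighbour in `S⁻(α)` for at least `k*t` indices `α`. -/
def VbadP (E : V → V → Prop) [DecidableRel E] (G : GadgetSystem V I) (k t : ℕ) : Finset V :=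
  (Vokay G).filter fun u =>
    k * t ≤ (Finset.univ.filter fun α : I => ∀ v ∈ G.Sm α, ¬ E u v).card

/-- Vertices of `V_okay` having no in-neighbour in `S⁺(α)` for at least `k*t` indices `α`. -/
def VbadM (E : V → V → Prop) [DecidableRel E] (G : GadgetSystem V I) (k t : ℕ) : Finset V :=
  (Vokay G).filter fun u =>
    k * t ≤ (Finset.univ.filter fun α : I => ∀ v ∈ G.Sp α, ¬ E v u).card

def Vbad (E : V → V → Prop) [DecidableRel E] (G : GadgetSystem V I) (k t : ℕ) : Finset V :=
  VbadP E G k t ∩ VbadM E G k t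

def VgoodP (E : V → V → Prop) [DecidableRel E] (G : GadgetSystem V I) (k t : ℕ) : Finset V :=
  Vokay G \ VbadP E G k t

def VgoodM (E : V → V → Prop) [DecidableRel E] (G : GadgetSystem V I) (k t : ℕ) : Finset V :=
  Vokay G \ VbadM E G k t

def Vgood (E : V → V → Prop) [DecidableRel E] (G : GadgetSystem V I) (k t : ℕ) : Finset V :=
  VgoodP E G k t ∩ VgoodM E G k t

/-- `W(C) = V ∖ ⋃_{α ∈ C} U(α)`. -/
def Wof (G : GadgetSystem V I) (C : Finset I) : Finset V :=
  Finset.univ \ C.biUnion G.U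

def NokayP (E : V → V → Prop) [DecidableRel E] (G : GadgetSystem V I) (u : V) : Finset V :=
  outN E u ∩ Vokay G

def NokayM (E : V → V → Prop) [DecidableRel E] (G : GadgetSystem V I) (u : V) : Finset V :=
  inN E u ∩ Vokay G

def NgoodP (E : V → V → Prop) [DecidableRel E] (G : GadgetSystem V I) (k t : ℕ) (u : V) :
    Finset V :=
  outN E u ∩ VgoodP E G k t

def NgoodM (E : V → V → Prop) [DecidableRel E] (G : GadgetSystem V I) (k t : ℕ) (u : V) :
    Finset V :=
  inN E u ∩ Vgood E G k t

/-! ### Properties (G1)–(G9) -/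

def CondG1 (G : GadgetSystem V I) : Prop :=
  ∀ α β : I, α ≠ β → Disjoint (G.U α) (G.U β)

def CondG2 (G : GadgetSystem V I) (k t : ℕ) : Prop :=
  ∀ α : I, (G.S α).card ≤ rho ∧ (G.X α).card ≤ rho * sigma1 * k * t

def CondG3 (E : V → V → Prop) (G : GadgetSystem V I) : Prop :=
  ∀ α : I, ∀ u ∈ G.Sm α, ∀ v ∈ G.Sp α, ReachWithin E (G.U α : Set V) u v

def CondG4 (E : V → V → Prop) (G : GadgetSystem V I) : Prop :=
  ∀ α : I, ∀ x : V, x ∉ G.X α →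
    (E x (G.sp α) → ∀ u ∈ G.U α \ G.S α, E x u) ∧
    (E (G.sm α) x → ∀ u ∈ G.U α \ G.S α, E u x)

def CondG5 (E : V → V → Prop) [DecidableRel E] (G : GadgetSystem V I) (k t : ℕ) : Prop :=
  ∀ u ∈ Vokay G,
    10 ^ 12 * (VbadP E G k t).card ≤ (outN E u).card ∧
    10 ^ 12 * (VbadM E G k t).card ≤ (inN E u).card

/-- Properties (G1)–(G5) of a gadget system. -/
def GadgetHyp (E : V → V → Prop) [DecidableRel E] (G : GadgetSystem V I) (k t : ℕ) : Prop :=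
  CondG1 G ∧ CondG2 G k t ∧ CondG3 E G ∧ CondG4 E G ∧ CondG5 E G k t

def CondG6 (E : V → V → Prop) [DecidableRel E] (G : GadgetSystem V I) (k t : ℕ) : Prop :=
  (Fintype.card V : ℝ) / 2 ≤ ((Vgood E G k t).card : ℝ)

def CondG7 (E : V → V → Prop) [DecidableRel E] (G : GadgetSystem V I) (k t τ₁ : ℕ) : Prop :=
  ∀ u ∈ Vokay G,
    max ((10 : ℝ) ^ 11 * ((VbadP E G k t).card : ℝ)) (((τ₁ * k * t : ℕ) : ℝ) / 2)
      ≤ ((outN E u ∩ VgoodP E G k t).card : ℝ)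

def CondG8 (E : V → V → Prop) [DecidableRel E] (G : GadgetSystem V I) (k t τ₁ : ℕ) : Prop :=
  ∀ u ∈ Vokay G,
    max ((10 : ℝ) ^ 11 * ((VbadM E G k t).card : ℝ)) (((τ₁ * k * t : ℕ) : ℝ) / 2)
      ≤ ((inN E u ∩ Vgood E G k t).card : ℝ)

def CondG9 (E : V → V → Prop) [DecidableRel E] (G : GadgetSystem V I) (k t τ₁ : ℕ) : Prop :=
  ∀ u : V,
    max ((10 : ℝ) ^ 11 * (((Finset.univ \ Vokay G).card : ℕ) : ℝ)) (((τ₁ * k * t : ℕ) : ℝ) / 2)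
      ≤ ((outN E u ∩ Vokay G).card : ℝ) ∧
    max ((10 : ℝ) ^ 11 * (((Finset.univ \ Vokay G).card : ℕ) : ℝ)) (((τ₁ * k * t : ℕ) : ℝ) / 2)
      ≤ ((inN E u ∩ Vokay G).card : ℝ)

/-- Properties (G6)–(G9) of a gadget system. -/
def GadgetHyp2 (E : V → V → Prop) [DecidableRel E] (G : GadgetSystem V I) (k t τ₁ : ℕ) :
    Prop :=
  CondG6 E G k t ∧ CondG7 E G k t τ₁ ∧ CondG8 E G k t τ₁ ∧ CondG9 E G k t τ₁

/-! ### Available vertices -/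

def AvailA1 (E : V → V → Prop) [DecidableRel E] (G : GadgetSystem V I) (k t : ℕ)
    (W : Finset V) (u : V) : Prop :=
  u ∈ Vgood E G k t ∩ W

def AvailA2 (E : V → V → Prop) [DecidableRel E] (G : GadgetSystem V I) (k t τ₂ : ℕ)
    (W : Finset V) (u : V) : Prop :=
  u ∈ (VgoodP E G k t \ VgoodM E G k t) ∩ W ∧
    ManyIn (inN E u) ((τ₂ * k * t : ℕ) : ℝ) (AvailA1 E G k t W)

def AvailA3 (E : V → V → Prop) [DecidableRel E] (G : GadgetSystem V I) (k t τ₂ : ℕ)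
    (W : Finset V) (u : V) : Prop :=
  u ∈ (VgoodM E G k t \ VgoodP E G k t) ∩ W ∧
    ManyIn (outN E u) ((τ₂ * k * t : ℕ) : ℝ)
      (fun v => AvailA1 E G k t W v ∨ AvailA2 E G k t τ₂ W v)

def AvailA4 (E : V → V → Prop) [DecidableRel E] (G : GadgetSystem V I) (k t τ₂ : ℕ)
    (W : Finset V) (u : V) : Prop :=
  u ∈ Vbad E G k t ∩ W ∧
    ManyIn (outN E u) ((τ₂ * k * t : ℕ) : ℝ)
      (fun v => AvailA1 E G k t W v ∨ AvailA2 E G k t τ₂ W v) ∧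
    ManyIn (inN E u) ((τ₂ * k * t : ℕ) : ℝ) (AvailA1 E G k t W)

/-- `u` is available (for `α`) with respect to a family `𝒜`, where `W = W(𝒜 ∖ {α})`. -/
def Available (E : V → V → Prop) [DecidableRel E] (G : GadgetSystem V I) (k t τ₂ : ℕ)
    (W : Finset V) (u : V) : Prop :=
  AvailA1 E G k t W u ∨ AvailA2 E G k t τ₂ W u ∨ AvailA3 E G k t τ₂ W u ∨
    AvailA4 E G k t τ₂ W u

/-! ### Eligible and helpful vertices -/

/-- Indices `α ∈ 𝒜` such that `u` has no out-neighbour in `S⁻(α)`. -/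
def MissOut (E : V → V → Prop) [DecidableRel E] (G : GadgetSystem V I) (𝒜 : Finset I)
    (u : V) : Finset I :=
  𝒜.filter fun α => ∀ v ∈ G.Sm α, ¬ E u v

/-- Indices `α ∈ 𝒜` such that `u` has no in-neighbour in `S⁺(α)`. -/
def MissIn (E : V → V → Prop) [DecidableRel E] (G : GadgetSystem V I) (𝒜 : Finset I)
    (u : V) : Finset I :=
  𝒜.filter fun α => ∀ v ∈ G.Sp α, ¬ E v u

def Nice1 (E : V → V → Prop) [DecidableRel E] (G : GadgetSystem V I) (k t : ℕ)
    (𝒜 : Finset I) (W : Finset V) (u : V) : Prop :=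
  u ∈ Vgood E G k t ∩ W ∧ (MissOut E G 𝒜 u).card ≤ k ∧ (MissIn E G 𝒜 u).card ≤ k

def Nice2 (E : V → V → Prop) [DecidableRel E] (G : GadgetSystem V I) (k t : ℕ) (m : ℝ)
    (𝒜 : Finset I) (W : Finset V) (u : V) : Prop :=
  u ∈ (VgoodP E G k t \ VgoodM E G k t) ∩ W ∧ (MissOut E G 𝒜 u).card ≤ k ∧
    ManyIn (inN E u) m (Nice1 E G k t 𝒜 W)

def Nice3 (E : V → V → Prop) [DecidableRel E] (G : GadgetSystem V I) (k t : ℕ) (m : ℝ)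
    (𝒜 : Finset I) (W : Finset V) (u : V) : Prop :=
  u ∈ (VgoodM E G k t \ VgoodP E G k t) ∩ W ∧ (MissIn E G 𝒜 u).card ≤ k ∧
    ManyIn (outN E u) m (fun v => Nice1 E G k t 𝒜 W v ∨ Nice2 E G k t m 𝒜 W v)

def Nice4 (E : V → V → Prop) [DecidableRel E] (G : GadgetSystem V I) (k t : ℕ) (m : ℝ)
    (𝒜 : Finset I) (W : Finset V) (u : V) : Prop :=
  u ∈ Vbad E G k t ∩ W ∧
    ManyIn (inN E u) m (Nice1 E G k t 𝒜 W) ∧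
    ManyIn (outN E u) m (fun v => Nice1 E G k t 𝒜 W v ∨ Nice2 E G k t m 𝒜 W v)

def NiceFor (E : V → V → Prop) [DecidableRel E] (G : GadgetSystem V I) (k t : ℕ) (m : ℝ)
    (𝒜 : Finset I) (W : Finset V) (u : V) : Prop :=
  Nice1 E G k t 𝒜 W u ∨ Nice2 E G k t m 𝒜 W u ∨ Nice3 E G k t m 𝒜 W u ∨
    Nice4 E G k t m 𝒜 W u

/-- `u` is eligible for `𝒜` in `W`. -/
def Eligible (E : V → V → Prop) [DecidableRel E] (G : GadgetSystem V I) (k t τ₃ : ℕ)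
    (𝒜 : Finset I) (W : Finset V) (u : V) : Prop :=
  NiceFor E G k t ((τ₃ * k * t : ℕ) : ℝ) 𝒜 W u

/-- `u` is helpful for `𝒜` in `W`. -/
def Helpful (E : V → V → Prop) [DecidableRel E] (G : GadgetSystem V I) (k t : ℕ)
    (𝒜 : Finset I) (W : Finset V) (u : V) : Prop :=
  NiceFor E G k t (k : ℝ) 𝒜 W u

end Defs

noncomputable def phi0 (τ₁ : ℕ) : ℝ := (τ₁ : ℝ) / 4
noncomputable def phi1 (τ₁ : ℕ) : ℝ := phi0 τ₁ / (2 ^ 6 * (rho : ℝ))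
noncomputable def phi2 (τ₁ : ℕ) : ℝ := phi1 τ₁ / (2 ^ 14 * (rho : ℝ) ^ 2)
noncomputable def phi3 (τ₁ : ℕ) : ℝ := phi2 τ₁ / (2 ^ 14 * (rho : ℝ) ^ 2)

section AuxPartition
open Finset
open Finset

lemma exists_partition {I : Type*} [DecidableEq I] (h : I → I → ℝ)
    (hnn : ∀ a b, 0 ≤ h a b) (m : ℕ) (hm : 0 < m) (A : Finset I) :
    ∃ f : I → Fin m,
      ∑ α ∈ A, ∑ β ∈ A.erase α, (if f β = f α then h α β else 0)
        ≤ (∑ α ∈ A, ∑ β ∈ A.erase α, h α β) / m := by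
  classical
  induction A using Finset.induction_on with
  | empty => exact ⟨fun _ => ⟨0, hm⟩, by simp⟩
  | @insert a A' ha ih =>
    obtain ⟨f, hf⟩ := ih
    obtain ⟨j, -, hj⟩ := Finset.exists_min_image (univ : Finset (Fin m))
      (fun j => ∑ β ∈ A', (if f β = j then h a β + h β a else 0)) ⟨⟨0, hm⟩, mem_univ _⟩
    set g : Fin m → ℝ := fun j => ∑ β ∈ A', (if f β = j then h a β + h β a else 0) with hg
    have hsum_g : ∑ j' : Fin m, g j' = ∑ β ∈ A', (h a β + h β a) := by
      rw [Finset.sum_comm]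
      refine Finset.sum_congr rfl fun β _ => ?_
      simp [hg, Finset.sum_ite_eq]
    have hgj : (m : ℝ) * g j ≤ ∑ β ∈ A', (h a β + h β a) := by
      have := Finset.card_nsmul_le_sum (univ : Finset (Fin m)) g (g j)
        (fun j' _ => hj j' (mem_univ _))
      simpa [hsum_g, nsmul_eq_mul] using this
    refine ⟨Function.update f a j, ?_⟩
    have hupd : ∀ β ∈ A', Function.update f a j β = f β := by
      intro β hβ
      exact Function.update_of_ne (ne_of_mem_of_not_mem hβ ha) _ _
    have hL : ∑ α ∈ insert a A', ∑ β ∈ (insert a A').erase α,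
        (if Function.update f a j β = Function.update f a j α then h α β else 0)
        = g j + ∑ α ∈ A', ∑ β ∈ A'.erase α, (if f β = f α then h α β else 0) := by
      rw [Finset.sum_insert ha, Finset.erase_insert ha]
      have h1 : ∑ β ∈ A', (if Function.update f a j β = Function.update f a j a
          then h a β else 0) = ∑ β ∈ A', (if f β = j then h a β else 0) := by
        refine Finset.sum_congr rfl fun β hβ => ?_
        rw [hupd β hβ, Function.update_self]
      have h2 : ∀ α ∈ A', ∑ β ∈ (insert a A').erase α,
          (if Function.update f a j β = Function.update f a j α then h α β else 0)
          = (if f α = j then h α a else 0)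
            + ∑ β ∈ A'.erase α, (if f β = f α then h α β else 0) := by
        intro α hα
        have hαa : α ≠ a := fun hh => ha (hh ▸ hα)
        rw [Finset.erase_insert_of_ne hαa.symm, Finset.sum_insert (fun hh => ha (Finset.erase_subset _ _ hh))]
        congr 1
        · rw [Function.update_self, hupd α hα]
          by_cases hc : f α = j
          · simp [hc]
          · have hc' : ¬ j = f α := fun hh => hc hh.symm
            simp [hc, hc']
        · refine Finset.sum_congr rfl fun β hβ => ?_
          rw [hupd β (Finset.erase_subset _ _ hβ), hupd α hα]
      rw [h1, Finset.sum_congr rfl h2, Finset.sum_add_distrib]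
      have h3 : g j = ∑ β ∈ A', (if f β = j then h a β else 0)
          + ∑ β ∈ A', (if f β = j then h β a else 0) := by
        rw [hg, ← Finset.sum_add_distrib]
        refine Finset.sum_congr rfl fun β _ => ?_
        split <;> ring
      have h4 : ∑ α ∈ A', (if f α = j then h α a else 0)
          = ∑ β ∈ A', (if f β = j then h β a else 0) := rfl
      rw [h4] at *
      linarith [h3]
    have hR : ∑ α ∈ insert a A', ∑ β ∈ (insert a A').erase α, h α β
        = ∑ β ∈ A', (h a β + h β a) + ∑ α ∈ A', ∑ β ∈ A'.erase α, h α β := by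
      rw [Finset.sum_insert ha, Finset.erase_insert ha]
      have h2 : ∀ α ∈ A', ∑ β ∈ (insert a A').erase α, h α β
          = h α a + ∑ β ∈ A'.erase α, h α β := by
        intro α hα
        have hαa : α ≠ a := fun hh => ha (hh ▸ hα)
        rw [Finset.erase_insert_of_ne hαa.symm,
          Finset.sum_insert (fun hh => ha (Finset.erase_subset _ _ hh))]
      rw [Finset.sum_congr rfl h2, Finset.sum_add_distrib, Finset.sum_add_distrib]
      ring
    rw [hL, hR]
    have hm' : (0:ℝ) < m := by exact_mod_cast hm
    rw [add_div]
    have : g j ≤ (∑ β ∈ A', (h a β + h β a)) / m := by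
      rw [le_div_iff₀ hm']; linarith [hgj]
    linarith [hf, this]

lemma exists_good_subset {I : Type*} [Fintype I] [DecidableEq I] (h : I → I → ℝ)
    (hnn : ∀ a b, 0 ≤ h a b) (m : ℕ) (hm : 0 < m) :
    ∃ C : Finset I,
      (Fintype.card I : ℝ) / m - 2 * (∑ α, ∑ β ∈ univ.erase α, h α β) / m ^ 2
          ≤ (C.card : ℝ) ∧
        ∀ α ∈ C, ∑ β ∈ C.erase α, h α β ≤ 1 / 2 := by
  classical
  obtain ⟨f, hf⟩ := exists_partition h hnn m hm univ
  set T := ∑ α, ∑ β ∈ univ.erase α, h α β with hT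
  set Cl : Fin m → Finset I := fun j => univ.filter (fun α => f α = j) with hCl
  set w : Fin m → ℝ := fun j => ∑ α ∈ Cl j, ∑ β ∈ (Cl j).erase α, h α β with hw
  have hkey : ∀ j, ∀ α ∈ Cl j, ∑ β ∈ (Cl j).erase α, h α β
      = ∑ β ∈ univ.erase α, (if f β = f α then h α β else 0) := by
    intro j α hα
    have hfα : f α = j := (Finset.mem_filter.mp hα).2
    have hset : (Cl j).erase α = (univ.erase α).filter (fun β => f β = f α) := by
      ext β
      simp [hCl, Finset.mem_filter, Finset.mem_erase, hfα, and_comm]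
    rw [hset, Finset.sum_filter]
  have hwsum : ∑ j, w j ≤ T / m := by
    calc ∑ j, w j = ∑ α, ∑ β ∈ univ.erase α, (if f β = f α then h α β else 0) := by
          rw [← Finset.sum_fiberwise (univ : Finset I) f
            (fun α => ∑ β ∈ univ.erase α, (if f β = f α then h α β else 0))]
          exact Finset.sum_congr rfl fun j _ => Finset.sum_congr rfl (hkey j)
      _ ≤ T / m := hf
  have hcard : ∑ j, ((Cl j).card : ℝ) = (Fintype.card I : ℝ) := by
    have := Finset.card_eq_sum_card_fiberwise
      (f := f) (s := (univ : Finset I)) (t := (univ : Finset (Fin m)))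
      (fun x _ => mem_univ _)
    rw [← Finset.card_univ, this]
    push_cast
    rfl
  have hex : ∃ j, (Fintype.card I : ℝ) / m - 2 * T / m ^ 2 ≤ (Cl j).card - 2 * w j := by
    by_contra hcon
    push_neg at hcon
    have hlt := Finset.sum_lt_sum_of_nonempty (s := (univ : Finset (Fin m)))
      ⟨⟨0, hm⟩, mem_univ _⟩ (fun j _ => hcon j)
    have hconst : ∑ _j : Fin m, ((Fintype.card I : ℝ) / m - 2 * T / m ^ 2)
        = (Fintype.card I : ℝ) - 2 * T / m := by
      rw [Finset.sum_const, Finset.card_univ, Fintype.card_fin, nsmul_eq_mul]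
      have hm' : (m : ℝ) ≠ 0 := by positivity
      field_simp
    have hsplit : ∑ j, ((Cl j).card - 2 * w j : ℝ)
        = ∑ j, ((Cl j).card : ℝ) - 2 * ∑ j, w j := by
      rw [Finset.sum_sub_distrib, Finset.mul_sum]
    rw [hsplit, hconst, hcard] at hlt
    have hm' : (0:ℝ) < m := by exact_mod_cast hm
    have h2 : 2 * ∑ j, w j ≤ 2 * (T / m) := by linarith [hwsum]
    have : 2 * (T / m) = 2 * T / m := by ring
    linarith
  obtain ⟨j, hj⟩ := hex
  set Bad : Finset I := (Cl j).filter (fun α => 1 / 2 < ∑ β ∈ (Cl j).erase α, h α β)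
    with hBad
  have hbadcard : (Bad.card : ℝ) ≤ 2 * w j := by
    have h1 : ∑ α ∈ Bad, ∑ β ∈ (Cl j).erase α, h α β ≤ w j := by
      refine Finset.sum_le_sum_of_subset_of_nonneg (Finset.filter_subset _ _)
        fun α _ _ => Finset.sum_nonneg fun β _ => hnn α β
    have h2 : (Bad.card : ℝ) * (1 / 2) ≤ ∑ α ∈ Bad, ∑ β ∈ (Cl j).erase α, h α β := by
      have := Finset.card_nsmul_le_sum Bad
        (fun α => ∑ β ∈ (Cl j).erase α, h α β) (1 / 2)
        (fun α hα => le_of_lt (Finset.mem_filter.mp hα).2)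
      simpa [nsmul_eq_mul] using this
    linarith
  refine ⟨Cl j \ Bad, ?_, ?_⟩
  · have hsub : Bad ⊆ Cl j := Finset.filter_subset _ _
    rw [Finset.card_sdiff_of_subset hsub]
    rw [Nat.cast_sub (Finset.card_le_card hsub)]
    linarith
  · intro α hα
    obtain ⟨hα1, hα2⟩ := Finset.mem_sdiff.mp hα
    have hle : ∑ β ∈ (Cl j).erase α, h α β ≤ 1 / 2 := by
      by_contra hcon
      exact hα2 (Finset.mem_filter.mpr ⟨hα1, lt_of_not_ge hcon⟩)
    refine le_trans (Finset.sum_le_sum_of_subset_of_nonneg ?_ fun β _ _ => hnn α β) hle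
    exact Finset.erase_subset_erase _ (Finset.sdiff_subset)

end AuxPartition

/-- Lemma 4.6. -/
theorem statement7 :
    ∃ C : ℕ, ∀ (τ₁ k t : ℕ), C ≤ τ₁ → C * τ₁ ≤ k → 2 ≤ t →
      ∀ (V : Type) [Fintype V] [DecidableEq V] (E : V → V → Prop) [DecidableRel E],
        IsTournament E → StronglyKConnected E (τ₁ * k * t) →
        ∀ G : GadgetSystem V (Fin (sigma1 * k * t)),
          GadgetHyp E G k t → GadgetHyp2 E G k t τ₁ →
          ∃ C₁ : Finset (Fin (sigma1 * k * t)),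
            ((sigma1 * k * t : ℕ) : ℝ) / (36 * (rho : ℝ) ^ 2) ≤ (C₁.card : ℝ) ∧
            ∀ α ∈ C₁, ∀ s ∈ G.S α,
              phi1 τ₁ * k * t ≤ ((NokayP E G s ∩ Wof G (C₁.erase α)).card : ℝ) ∧
              phi1 τ₁ * k * t ≤ ((NokayM E G s ∩ Wof G (C₁.erase α)).card : ℝ) := by
  classical
  refine ⟨1, ?_⟩
  intro τ₁ k t hCτ hCk ht V _ _ E _ _hT _hconn G hG hG2x
  obtain ⟨hG1, hG2c, -, -, -⟩ := hG
  obtain ⟨-, -, -, hG9⟩ := hG2x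
  have hτpos : 0 < τ₁ := hCτ
  have hkpos : 0 < k := lt_of_lt_of_le hτpos (by simpa using hCk)
  have htpos : 0 < t := lt_of_lt_of_le (by norm_num) ht
  have hτktpos : (0:ℝ) < ((τ₁ * k * t : ℕ) : ℝ) := by
    exact_mod_cast Nat.mul_pos (Nat.mul_pos hτpos hkpos) htpos
  have hNP : ∀ u : V, ((τ₁ * k * t : ℕ) : ℝ) / 2 ≤ ((NokayP E G u).card : ℝ) :=
    fun u => le_trans (le_max_right _ _) ((hG9 u).1)
  have hNM : ∀ u : V, ((τ₁ * k * t : ℕ) : ℝ) / 2 ≤ ((NokayM E G u).card : ℝ) :=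
    fun u => le_trans (le_max_right _ _) ((hG9 u).2)
  have hNPpos : ∀ u : V, (0:ℝ) < ((NokayP E G u).card : ℝ) :=
    fun u => lt_of_lt_of_le (by linarith) (hNP u)
  have hNMpos : ∀ u : V, (0:ℝ) < ((NokayM E G u).card : ℝ) :=
    fun u => lt_of_lt_of_le (by linarith) (hNM u)
  set HF : Fin (sigma1 * k * t) → Fin (sigma1 * k * t) → ℝ := fun α β =>
    ∑ s ∈ G.S α, (((NokayP E G s ∩ G.U β).card : ℝ) / ((NokayP E G s).card : ℝ)
      + ((NokayM E G s ∩ G.U β).card : ℝ) / ((NokayM E G s).card : ℝ)) with hHF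
  have hnn : ∀ a b, 0 ≤ HF a b := by
    intro a b
    refine Finset.sum_nonneg fun s _ => add_nonneg ?_ ?_ <;>
      exact div_nonneg (Nat.cast_nonneg _) (Nat.cast_nonneg _)
  have hcover : ∀ N' : Finset V,
      ∑ β : Fin (sigma1 * k * t), ((N' ∩ G.U β).card : ℝ) ≤ (N'.card : ℝ) := by
    intro N'
    have h1 : ∑ β : Fin (sigma1 * k * t), (N' ∩ G.U β).card
        = ((univ : Finset (Fin (sigma1 * k * t))).biUnion fun β => N' ∩ G.U β).card :=
      (Finset.card_biUnion fun β _ γ _ hne =>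
        Disjoint.mono inter_subset_right inter_subset_right (hG1 β γ hne)).symm
    have h2 : ((univ : Finset (Fin (sigma1 * k * t))).biUnion fun β => N' ∩ G.U β).card
        ≤ N'.card :=
      Finset.card_le_card (Finset.biUnion_subset.mpr fun β _ => inter_subset_left)
    have := le_trans (le_of_eq h1) h2
    push_cast
    exact_mod_cast this
  have hrow : ∀ α, ∑ β ∈ univ.erase α, HF α β ≤ 2 * (rho : ℝ) := by
    intro α
    have h1 : ∑ β ∈ univ.erase α, HF α β ≤ ∑ β : Fin (sigma1 * k * t), HF α β :=
      Finset.sum_le_sum_of_subset_of_nonneg (Finset.erase_subset _ _)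
        fun β _ _ => hnn α β
    have h2 : ∑ β : Fin (sigma1 * k * t), HF α β = ∑ s ∈ G.S α,
        ((∑ β : Fin (sigma1 * k * t), ((NokayP E G s ∩ G.U β).card : ℝ))
            / ((NokayP E G s).card : ℝ)
          + (∑ β : Fin (sigma1 * k * t), ((NokayM E G s ∩ G.U β).card : ℝ))
            / ((NokayM E G s).card : ℝ)) := by
      rw [Finset.sum_comm]
      refine Finset.sum_congr rfl fun s _ => ?_
      rw [Finset.sum_add_distrib, Finset.sum_div, Finset.sum_div]
    have h3 : ∀ s : V, (∑ β : Fin (sigma1 * k * t), ((NokayP E G s ∩ G.U β).card : ℝ))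
            / ((NokayP E G s).card : ℝ)
          + (∑ β : Fin (sigma1 * k * t), ((NokayM E G s ∩ G.U β).card : ℝ))
            / ((NokayM E G s).card : ℝ) ≤ 2 := by
      intro s
      have d1 : (∑ β : Fin (sigma1 * k * t), ((NokayP E G s ∩ G.U β).card : ℝ))
          / ((NokayP E G s).card : ℝ) ≤ 1 :=
        (div_le_one (hNPpos s)).mpr (hcover _)
      have d2 : (∑ β : Fin (sigma1 * k * t), ((NokayM E G s ∩ G.U β).card : ℝ))
          / ((NokayM E G s).card : ℝ) ≤ 1 :=
        (div_le_one (hNMpos s)).mpr (hcover _)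
      linarith
    have h4 : ∑ β : Fin (sigma1 * k * t), HF α β ≤ 2 * ((G.S α).card : ℝ) := by
      rw [h2]
      calc _ ≤ ∑ _s ∈ G.S α, (2:ℝ) := Finset.sum_le_sum fun s _ => h3 s
        _ = 2 * ((G.S α).card : ℝ) := by rw [Finset.sum_const, nsmul_eq_mul]; ring
    have h5 : ((G.S α).card : ℝ) ≤ (rho : ℝ) := by exact_mod_cast (hG2c α).1
    linarith
  obtain ⟨C₁, hC1, hC2⟩ := exists_good_subset HF hnn 160000 (by norm_num)
  have hrho : (rho : ℝ) = 10 ^ 4 := by norm_num [rho]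
  have hNcard : (Fintype.card (Fin (sigma1 * k * t)) : ℝ) = ((sigma1 * k * t : ℕ) : ℝ) := by
    rw [Fintype.card_fin]
  have hTle : ∑ α, ∑ β ∈ univ.erase α, HF α β
      ≤ ((sigma1 * k * t : ℕ) : ℝ) * (2 * 10 ^ 4) := by
    calc ∑ α, ∑ β ∈ univ.erase α, HF α β
        ≤ (univ : Finset (Fin (sigma1 * k * t))).card • (2 * (rho : ℝ)) :=
          Finset.sum_le_card_nsmul _ _ _ fun α _ => hrow α
      _ = ((sigma1 * k * t : ℕ) : ℝ) * (2 * 10 ^ 4) := by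
          rw [Finset.card_univ, nsmul_eq_mul, hNcard, hrho]
  refine ⟨C₁, ?_, ?_⟩
  · rw [hNcard] at hC1
    rw [hrho]
    have hN0 : (0:ℝ) ≤ ((sigma1 * k * t : ℕ) : ℝ) := Nat.cast_nonneg _
    set x : ℝ := ((sigma1 * k * t : ℕ) : ℝ)
    set T : ℝ := ∑ α, ∑ β ∈ univ.erase α, HF α β
    have : x / (36 * ((10:ℝ) ^ 4) ^ 2) ≤ x / 160000 - 2 * T / 160000 ^ 2 := by
      rw [div_sub_div _ _ (by norm_num : (160000:ℝ) ≠ 0) (by norm_num : (160000:ℝ)^2 ≠ 0)]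
      rw [div_le_div_iff₀ (by norm_num) (by positivity)]
      nlinarith [hTle, hN0]
    linarith
  · intro α hα s hs
    have hhalf := hC2 α hα
    have main : ∀ N' : Finset V, ((τ₁ * k * t : ℕ) : ℝ) / 2 ≤ (N'.card : ℝ) →
        (∀ β, ((N' ∩ G.U β).card : ℝ) ≤ (N'.card : ℝ) * HF α β) →
        phi1 τ₁ * k * t ≤ ((N' ∩ Wof G (C₁.erase α)).card : ℝ) := by
      intro N' hN1 hN2
      have hsubcov : N'.card ≤ (N' ∩ Wof G (C₁.erase α)).card
          + ∑ β ∈ C₁.erase α, (N' ∩ G.U β).card := by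
        have hsub : N' ⊆ (N' ∩ Wof G (C₁.erase α))
            ∪ (C₁.erase α).biUnion (fun β => N' ∩ G.U β) := by
          intro x hx
          rw [Finset.mem_union]
          by_cases hxW : x ∈ Wof G (C₁.erase α)
          · exact Or.inl (Finset.mem_inter.mpr ⟨hx, hxW⟩)
          · right
            have hxb : x ∈ (C₁.erase α).biUnion G.U := by
              by_contra hxb
              exact hxW (Finset.mem_sdiff.mpr ⟨Finset.mem_univ _, hxb⟩)
            obtain ⟨β, hβ, hxβ⟩ := Finset.mem_biUnion.mp hxb
            exact Finset.mem_biUnion.mpr ⟨β, hβ, Finset.mem_inter.mpr ⟨hx, hxβ⟩⟩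
        calc N'.card ≤ _ := Finset.card_le_card hsub
          _ ≤ (N' ∩ Wof G (C₁.erase α)).card
              + ((C₁.erase α).biUnion fun β => N' ∩ G.U β).card :=
            Finset.card_union_le _ _
          _ ≤ _ := Nat.add_le_add_left (Finset.card_biUnion_le) _
      have hsum : ∑ β ∈ C₁.erase α, ((N' ∩ G.U β).card : ℝ)
          ≤ (N'.card : ℝ) * (1 / 2) := by
        calc ∑ β ∈ C₁.erase α, ((N' ∩ G.U β).card : ℝ)
            ≤ ∑ β ∈ C₁.erase α, (N'.card : ℝ) * HF α β :=
              Finset.sum_le_sum fun β _ => hN2 β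
          _ = (N'.card : ℝ) * ∑ β ∈ C₁.erase α, HF α β := by rw [Finset.mul_sum]
          _ ≤ (N'.card : ℝ) * (1 / 2) :=
              mul_le_mul_of_nonneg_left hhalf (Nat.cast_nonneg _)
      have hcast : (N'.card : ℝ) ≤ ((N' ∩ Wof G (C₁.erase α)).card : ℝ)
          + ∑ β ∈ C₁.erase α, ((N' ∩ G.U β).card : ℝ) := by
        push_cast
        exact_mod_cast hsubcov
      have hphi : phi1 τ₁ * (k : ℝ) * (t : ℝ) ≤ ((τ₁ * k * t : ℕ) : ℝ) / 4 := by
        have h0 : (0:ℝ) ≤ (τ₁ : ℝ) * k * t := by positivity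
        have heq : phi1 τ₁ * (k : ℝ) * (t : ℝ) = ((τ₁ : ℝ) * k * t) / 2560000 := by
          simp only [phi1, phi0, hrho]
          ring
        rw [heq]
        push_cast
        linarith
      linarith
    refine ⟨main (NokayP E G s) (hNP s) ?_, main (NokayM E G s) (hNM s) ?_⟩
    · intro β
      have h1 : ((NokayP E G s ∩ G.U β).card : ℝ) / ((NokayP E G s).card : ℝ)
          + ((NokayM E G s ∩ G.U β).card : ℝ) / ((NokayM E G s).card : ℝ) ≤ HF α β :=
        Finset.single_le_sum (f := fun s' =>
          ((NokayP E G s' ∩ G.U β).card : ℝ) / ((NokayP E G s').card : ℝ)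
            + ((NokayM E G s' ∩ G.U β).card : ℝ) / ((NokayM E G s').card : ℝ))
          (fun s' _ => add_nonneg (div_nonneg (Nat.cast_nonneg _) (Nat.cast_nonneg _))
            (div_nonneg (Nat.cast_nonneg _) (Nat.cast_nonneg _))) hs
      have h2 : ((NokayP E G s ∩ G.U β).card : ℝ) / ((NokayP E G s).card : ℝ) ≤ HF α β := by
        have := div_nonneg (Nat.cast_nonneg (α := ℝ) (NokayM E G s ∩ G.U β).card)
          (Nat.cast_nonneg (NokayM E G s).card)
        linarith
      rw [div_le_iff₀ (hNPpos s)] at h2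
      linarith [h2]
    · intro β
      have h1 : ((NokayP E G s ∩ G.U β).card : ℝ) / ((NokayP E G s).card : ℝ)
          + ((NokayM E G s ∩ G.U β).card : ℝ) / ((NokayM E G s).card : ℝ) ≤ HF α β :=
        Finset.single_le_sum (f := fun s' =>
          ((NokayP E G s' ∩ G.U β).card : ℝ) / ((NokayP E G s').card : ℝ)
            + ((NokayM E G s' ∩ G.U β).card : ℝ) / ((NokayM E G s').card : ℝ))
          (fun s' _ => add_nonneg (div_nonneg (Nat.cast_nonneg _) (Nat.cast_nonneg _))
            (div_nonneg (Nat.cast_nonneg _) (Nat.cast_nonneg _))) hs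
      have h2 : ((NokayM E G s ∩ G.U β).card : ℝ) / ((NokayM E G s).card : ℝ) ≤ HF α β := by
        have := div_nonneg (Nat.cast_nonneg (α := ℝ) (NokayP E G s ∩ G.U β).card)
          (Nat.cast_nonneg (NokayP E G s).card)
        linarith
      rw [div_le_iff₀ (hNMpos s)] at h2
      linarith [h2]


end TournamentPartition
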